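/- Let (𝒳, ℬ, P, f) be a measure-preserving system enjoying decay of correlations against L¹ with non-increasing rate γ → 0, A ∈ ℬ with 1_A ∈ 𝒞, ℓ, k, t, b ∈ ℕ with n = k⌊n/k⌋ + b, ⌊n/k⌋·P(A) < 1, t < ⌊n/k⌋, ℓ = ⌊n/k⌋ − t, L = 1 − ℓP(A). Then |P(𝒲_{0,n}(A)) − L^k| ≤ kΥ_A(L+Υ_A)^{k-1}(1 + L + Υ_A), where Υ_A = t[P(A)+‖1_A‖_𝒞 γ(t)] + Ξ_{A,ℓ}. -/

import Mathlib

open MeasureTheory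

/-- The event of avoiding `A` during the time window `[s, s+ℓ)`. -/
def avoidWindow {X : Type*} (T : X → X) (s ℓ : ℕ) (A : Set X) : Set X :=
  ⋂ i ∈ Finset.Ico s (s + ℓ), T^[i] ⁻¹' Aᶜ

lemma mem_avoidWindow {X : Type*} {T : X → X} {s l : ℕ} {A : Set X} {x : X} :
    x ∈ avoidWindow T s l A ↔ ∀ i, s ≤ i → i < s + l → T^[i] x ∉ A := by
  simp only [avoidWindow, Set.mem_iInter, Set.mem_preimage, Set.mem_compl_iff,
    Finset.mem_Ico, and_imp]

lemma mem_preimage_avoidWindow {X : Type*} {T : X → X} {g s l : ℕ} {A : Set X} {x : X} :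
    x ∈ T^[g] ⁻¹' avoidWindow T s l A ↔ ∀ i, s ≤ i → i < s + l → T^[i + g] x ∉ A := by
  rw [Set.mem_preimage, mem_avoidWindow]
  simp only [← Function.iterate_add_apply]

lemma avoidWindow_cons {X : Type*} (T : X → X) (a d : ℕ) (A : Set X) :
    avoidWindow T a (d + 1) A = T^[a] ⁻¹' Aᶜ ∩ avoidWindow T (a + 1) d A := by
  ext x
  simp only [mem_avoidWindow, Set.mem_inter_iff, Set.mem_preimage, Set.mem_compl_iff]
  constructor
  · intro h; exact ⟨h a le_rfl (by omega), fun i h1 h2 => h i (by omega) (by omega)⟩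
  · rintro ⟨h0, h⟩ i h1 h2
    rcases eq_or_lt_of_le h1 with rfl | h1'
    · exact h0
    · exact h i h1' (by omega)

lemma avoidWindow_shift {X : Type*} (T : X → X) (g s l : ℕ) (A : Set X) :
    avoidWindow T (s + g) l A = T^[g] ⁻¹' avoidWindow T s l A := by
  ext x
  rw [mem_preimage_avoidWindow, mem_avoidWindow]
  constructor
  · intro h i h1 h2
    exact h (i + g) (by omega) (by omega)
  · intro h i h1 h2
    have := h (i - g) (by omega) (by omega)
    rwa [show i - g + g = i by omega] at this

lemma measurableSet_avoidWindow {X : Type*} [MeasurableSpace X] {T : X → X}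
    (hT : Measurable T) {A : Set X} (hA : MeasurableSet A) (s l : ℕ) :
    MeasurableSet (avoidWindow T s l A) :=
  Finset.measurableSet_biInter _ fun i _ => (hT.iterate i) hA.compl

set_option maxHeartbeats 2000000 in
theorem n_estimate {X : Type*} [MeasurableSpace X] (μ : Measure X)
    [IsProbabilityMeasure μ] (f : X → X) (hf : MeasurePreserving f μ μ)
    (𝒞 : Set (X → ℝ)) (N : (X → ℝ) → ℝ) (γ : ℕ → ℝ)
    (hγmono : Antitone γ) (hγ0 : Filter.Tendsto γ Filter.atTop (nhds 0))
    (hdecay : ∀ φ ∈ 𝒞, ∀ ψ : X → ℝ, Integrable ψ μ → ∀ n : ℕ,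
      |(∫ x, φ x * ψ (f^[n] x) ∂μ) - (∫ x, φ x ∂μ) * ∫ x, ψ x ∂μ| ≤
        N φ * (∫ x, |ψ x| ∂μ) * γ n)
    (A : Set X) (hA : MeasurableSet A)
    (hind : A.indicator (fun _ => (1 : ℝ)) ∈ 𝒞)
    -- `R` is the first return time of the set `A`.
    (R : ℕ) (hR : ∀ i, 0 < i → i < R → A ∩ f^[i] ⁻¹' A = ∅)
    (n k b ℓ t : ℕ) (hk : 0 < k) (ht : 0 < t)
    (hn : n = k * (n / k) + b) (htℓ : t < n / k) (hℓ : ℓ = n / k - t)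
    (hPA : ((n / k : ℕ) : ℝ) * (μ A).toReal < 1)
    (L Ξ Υ : ℝ) (hL : L = 1 - (ℓ : ℝ) * (μ A).toReal)
    (hΞ : Ξ = N (A.indicator fun _ => (1 : ℝ)) * (ℓ : ℝ) * γ t +
        N (A.indicator fun _ => (1 : ℝ)) * ((ℓ - R : ℕ) : ℝ) *
          ((μ A).toReal + N (A.indicator fun _ => (1 : ℝ)) * γ t) *
          ∑ q ∈ Finset.Ico R ℓ, γ q +
        (ℓ : ℝ) * ((ℓ - R : ℕ) : ℝ) *
          ((μ A).toReal ^ 2 + (μ A).toReal * N (A.indicator fun _ => (1 : ℝ)) * γ t))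
    (hΥ : Υ = (t : ℝ) * ((μ A).toReal + N (A.indicator fun _ => (1 : ℝ)) * γ t) + Ξ) :
    |(μ (avoidWindow f 0 n A)).toReal - L ^ k| ≤
      (k : ℝ) * Υ * (L + Υ) ^ (k - 1) * (1 + L + Υ) := by
  classical
  have hfm : Measurable f := hf.measurable
  set m : ℕ := n / k with hmdef
  set p : ℝ := (μ A).toReal with hp
  set c : ℝ := N (A.indicator fun _ => (1 : ℝ)) with hc
  set τ : ℕ := ℓ + t with hτdef
  set W : ℕ → Set X := fun s => avoidWindow f 0 s A with hWdef
  have hWms : ∀ s l, MeasurableSet (avoidWindow f s l A) :=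
    fun s l => measurableSet_avoidWindow hfm hA s l
  have hWm0 : ∀ s, MeasurableSet (W s) := fun s => hWms 0 s
  -- basic facts
  have hγnn : ∀ q, 0 ≤ γ q := fun q =>
    le_of_tendsto hγ0 (Filter.eventually_atTop.2 ⟨q, fun x hx => hγmono hx⟩)
  have hp0 : 0 ≤ p := ENNReal.toReal_nonneg
  have hνmono : ∀ {S T : Set X}, S ⊆ T → (μ S).toReal ≤ (μ T).toReal :=
    fun h => ENNReal.toReal_mono (measure_ne_top μ _) (measure_mono h)
  have hsplitν : ∀ (S T : Set X), MeasurableSet T →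
      (μ S).toReal = (μ (S ∩ T)).toReal + (μ (S \ T)).toReal := by
    intro S T hT
    rw [← ENNReal.toReal_add (measure_ne_top μ _) (measure_ne_top μ _),
      measure_inter_add_diff S hT]
  have hunionν : ∀ (S T : Set X) (F : Finset ℕ) (g : ℕ → Set X),
      S ⊆ T ∪ ⋃ j ∈ F, g j →
      (μ S).toReal ≤ (μ T).toReal + ∑ j ∈ F, (μ (g j)).toReal := by
    intro S T F g hsub
    have h1 : μ S ≤ μ T + ∑ j ∈ F, μ (g j) :=
      le_trans (measure_mono hsub) (le_trans (measure_union_le _ _)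
        (add_le_add (le_refl _) (measure_biUnion_finset_le F g)))
    have h2 : μ T + ∑ j ∈ F, μ (g j) ≠ ⊤ :=
      ENNReal.add_ne_top.2 ⟨measure_ne_top μ T,
        (ENNReal.sum_lt_top.mpr (fun j _ => measure_lt_top μ (g j))).ne⟩
    calc (μ S).toReal ≤ (μ T + ∑ j ∈ F, μ (g j)).toReal := ENNReal.toReal_mono h2 h1
      _ = (μ T).toReal + ∑ j ∈ F, (μ (g j)).toReal := by
        rw [ENNReal.toReal_add (measure_ne_top μ T)
          ((ENNReal.sum_lt_top.mpr (fun j _ => measure_lt_top μ (g j))).ne),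
          ENNReal.toReal_sum (fun j _ => measure_ne_top μ (g j))]
  have hshiftν : ∀ (g : ℕ) (S : Set X), MeasurableSet S →
      (μ (f^[g] ⁻¹' S)).toReal = (μ S).toReal := by
    intro g S hS
    rw [(hf.iterate g).measure_preimage hS.nullMeasurableSet]
  have humono : ∀ {a b : ℕ}, a ≤ b → (μ (W b)).toReal ≤ (μ (W a)).toReal := by
    intro a b hab
    refine hνmono (fun x hx => ?_)
    have hx' : x ∈ avoidWindow f 0 b A := hx
    rw [mem_avoidWindow] at hx' ⊢
    exact fun i h1 h2 => hx' i h1 (by omega)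
  have hunn : ∀ s, (0:ℝ) ≤ (μ (W s)).toReal := fun s => ENNReal.toReal_nonneg
  -- decay of correlations for indicators
  have hdec : ∀ (S : Set X) (g : ℕ), MeasurableSet S →
      |(μ (A ∩ f^[g] ⁻¹' S)).toReal - p * (μ S).toReal| ≤ c * γ g * (μ S).toReal := by
    intro S g hS
    have hint : Integrable (S.indicator (fun _ => (1:ℝ))) μ :=
      (integrable_const (1:ℝ)).indicator hS
    have h := hdecay (A.indicator fun _ => (1:ℝ)) hind (S.indicator fun _ => (1:ℝ)) hint g
    have hfe : (fun x => A.indicator (fun _ => (1:ℝ)) x * S.indicator (fun _ => (1:ℝ)) (f^[g] x))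
        = (A ∩ f^[g] ⁻¹' S).indicator (fun _ => (1:ℝ)) := by
      funext x
      by_cases h1 : x ∈ A <;> by_cases h2 : f^[g] x ∈ S <;>
        simp [Set.indicator_apply, h1, h2, Set.mem_preimage]
    have habs : (fun x => |S.indicator (fun _ => (1:ℝ)) x|) = S.indicator (fun _ => (1:ℝ)) := by
      funext x; exact abs_of_nonneg (Set.indicator_nonneg (fun _ _ => zero_le_one) x)
    have e1 : ∫ x, A.indicator (fun _ => (1:ℝ)) x * S.indicator (fun _ => (1:ℝ)) (f^[g] x) ∂μ
        = (μ (A ∩ f^[g] ⁻¹' S)).toReal := by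
      rw [show (fun x => A.indicator (fun _ => (1:ℝ)) x * S.indicator (fun _ => (1:ℝ)) (f^[g] x))
        = (A ∩ f^[g] ⁻¹' S).indicator (fun _ => (1:ℝ)) from hfe]
      rw [MeasureTheory.integral_indicator_const (1:ℝ) (hA.inter ((hfm.iterate g) hS))]
      simp [Measure.real]
    have e2 : ∫ x, A.indicator (fun _ => (1:ℝ)) x ∂μ = p := by
      rw [MeasureTheory.integral_indicator_const (1:ℝ) hA]; simp [hp, Measure.real]
    have e3 : ∫ x, S.indicator (fun _ => (1:ℝ)) x ∂μ = (μ S).toReal := by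
      rw [MeasureTheory.integral_indicator_const (1:ℝ) hS]; simp [Measure.real]
    have e4 : ∫ x, |S.indicator (fun _ => (1:ℝ)) x| ∂μ = (μ S).toReal := by
      rw [show (fun x => |S.indicator (fun _ => (1:ℝ)) x|)
        = S.indicator (fun _ => (1:ℝ)) from habs]
      exact e3
    rw [e1, e2, e3, e4, ← hc] at h
    calc |(μ (A ∩ f^[g] ⁻¹' S)).toReal - p * (μ S).toReal| ≤ c * (μ S).toReal * γ g := h
      _ = c * γ g * (μ S).toReal := by ring
  have hcγ : ∀ q, 0 ≤ c * γ q := by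
    intro q
    have h := hdecay (A.indicator fun _ => (1:ℝ)) hind (fun _ => (1:ℝ)) (integrable_const 1) q
    simp only [mul_one, abs_one, integral_const, Measure.real, measure_univ, ENNReal.toReal_one, one_smul,
      sub_self, abs_zero, smul_eq_mul] at h
    rw [← hc] at h
    linarith
  have hcγle : ∀ {a b : ℕ}, a ≤ b → c * γ b ≤ c * γ a := by
    intro a b hab
    rcases le_or_gt 0 c with h | h
    · exact mul_le_mul_of_nonneg_left (hγmono hab) h
    · have h1 : γ b = 0 := le_antisymm (by nlinarith [hcγ b]) (hγnn b)
      have h2 : γ a = 0 := le_antisymm (by nlinarith [hcγ a]) (hγnn a)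
      rw [h1, h2]
  have hq0 : 0 ≤ p + c * γ t := add_nonneg hp0 (hcγ t)
  -- the "extend the lag to at least t" estimate
  have hP3 : ∀ s q : ℕ, (μ (A ∩ f^[q] ⁻¹' W s)).toReal
      ≤ (p + c * γ t) * (μ (W (s - t))).toReal := by
    intro s q
    set g := t - q with hgdef
    have hsub2 : A ∩ f^[q] ⁻¹' W s ⊆ A ∩ f^[q + g] ⁻¹' W (s - g) := by
      rintro x ⟨hxA, hxq⟩
      refine ⟨hxA, ?_⟩
      have h2 : x ∈ f^[q] ⁻¹' avoidWindow f 0 s A := hxq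
      rw [mem_preimage_avoidWindow] at h2
      show x ∈ f^[q+g] ⁻¹' avoidWindow f 0 (s - g) A
      rw [mem_preimage_avoidWindow]
      intro i h1i h2i
      have := h2 (i + g) (by omega) (by omega)
      rwa [show i + g + q = i + (q + g) by omega] at this
    have h1 : (μ (A ∩ f^[q] ⁻¹' W s)).toReal ≤ (μ (A ∩ f^[q+g] ⁻¹' W (s-g))).toReal :=
      hνmono hsub2
    have h2 := hdec (W (s-g)) (q+g) (hWm0 _)
    have h3 : c * γ (q+g) * (μ (W (s-g))).toReal ≤ c * γ t * (μ (W (s-g))).toReal :=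
      mul_le_mul_of_nonneg_right (hcγle (by omega)) (hunn _)
    have h4 : (μ (W (s-g))).toReal ≤ (μ (W (s-t))).toReal := humono (by omega)
    have h5 : (μ (A ∩ f^[q+g] ⁻¹' W (s-g))).toReal ≤ (p + c * γ t) * (μ (W (s-g))).toReal := by
      have := (abs_le.1 h2).2
      rw [add_mul]
      linarith
    calc (μ (A ∩ f^[q] ⁻¹' W s)).toReal ≤ (p + c * γ t) * (μ (W (s-g))).toReal :=
          le_trans h1 h5
      _ ≤ (p + c * γ t) * (μ (W (s-t))).toReal := mul_le_mul_of_nonneg_left h4 hq0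
  -- telescoping decomposition by the last entrance
  have hdecomp : ∀ (d a : ℕ) (Z : Set X), MeasurableSet Z →
      (μ Z).toReal - (μ (avoidWindow f a d A ∩ Z)).toReal
        = ∑ i ∈ Finset.range d,
            (μ (f^[a+i] ⁻¹' A ∩ (avoidWindow f (a+i+1) (d-i-1) A ∩ Z))).toReal := by
    intro d
    induction d with
    | zero =>
      intro a Z hZ
      have h0 : avoidWindow f a 0 A = Set.univ := by
        ext x
        simp only [mem_avoidWindow, Set.mem_univ, iff_true, Nat.add_zero]
        intro i h1 h2
        exact absurd h2 (by omega)
      rw [h0, Set.univ_inter]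
      simp
    | succ d ih =>
      intro a Z hZ
      have hsp := hsplitν (avoidWindow f (a+1) d A ∩ Z) (f^[a] ⁻¹' A) ((hfm.iterate a) hA)
      have hdiff : (avoidWindow f (a+1) d A ∩ Z) \ (f^[a] ⁻¹' A)
          = avoidWindow f a (d+1) A ∩ Z := by
        rw [avoidWindow_cons]
        ext x
        simp only [Set.mem_diff, Set.mem_inter_iff, Set.mem_preimage, Set.mem_compl_iff]
        tauto
      rw [hdiff] at hsp
      have hIH := ih (a+1) Z hZ
      rw [Finset.sum_range_succ']
      have hgs : ∀ i, (μ (f^[a+(i+1)] ⁻¹' A ∩ (avoidWindow f (a+(i+1)+1) (d+1-(i+1)-1) A ∩ Z))).toReal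
          = (μ (f^[(a+1)+i] ⁻¹' A ∩ (avoidWindow f ((a+1)+i+1) (d-i-1) A ∩ Z))).toReal := by
        intro i
        rw [show a+(i+1) = (a+1)+i by omega, show d+1-(i+1)-1 = d-i-1 by omega]
      have hg0 : (μ (f^[a+0] ⁻¹' A ∩ (avoidWindow f (a+0+1) (d+1-0-1) A ∩ Z))).toReal
          = (μ ((avoidWindow f (a+1) d A ∩ Z) ∩ f^[a] ⁻¹' A)).toReal := by
        rw [show a+0 = a by omega, show a+0+1 = a+1 by omega, show d+1-0-1 = d by omega,
          Set.inter_comm]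
      rw [Finset.sum_congr rfl (fun i _ => hgs i), hg0, ← hIH]
      linarith
  -- the per-term estimate
  have hTermB : ∀ s d : ℕ,
      |(μ (A ∩ (avoidWindow f 1 d A ∩ f^[d + 1 + t] ⁻¹' W s))).toReal - p * (μ (W s)).toReal|
        ≤ c * γ t * (μ (W s)).toReal
          + ∑ j ∈ Finset.Ico (max R 1) (d + 1),
              (p + c * γ j) * ((p + c * γ t) * (μ (W s)).toReal) := by
    intro s d
    have hus : (0:ℝ) ≤ (μ (W s)).toReal := hunn s
    have hdB := hdec (W s) (d+1+t) (hWm0 s)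
    have hdBt : |(μ (A ∩ f^[d+1+t] ⁻¹' W s)).toReal - p * (μ (W s)).toReal|
        ≤ c * γ t * (μ (W s)).toReal :=
      le_trans hdB (mul_le_mul_of_nonneg_right (hcγle (by omega)) hus)
    have hsum_nn : (0:ℝ) ≤ ∑ j ∈ Finset.Ico (max R 1) (d + 1),
        (p + c * γ j) * ((p + c * γ t) * (μ (W s)).toReal) :=
      Finset.sum_nonneg fun j _ =>
        mul_nonneg (add_nonneg hp0 (hcγ j)) (mul_nonneg hq0 hus)
    have hTB : A ∩ (avoidWindow f 1 d A ∩ f^[d+1+t] ⁻¹' W s) ⊆ A ∩ f^[d+1+t] ⁻¹' W s :=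
      fun x hx => ⟨hx.1, hx.2.2⟩
    have hup := hνmono hTB
    -- lower bound via the first-return pieces
    have hincl : A ∩ f^[d+1+t] ⁻¹' W s
        ⊆ (A ∩ (avoidWindow f 1 d A ∩ f^[d+1+t] ⁻¹' W s))
          ∪ ⋃ j ∈ Finset.Ico (max R 1) (d + 1),
              (A ∩ f^[j] ⁻¹' (A ∩ f^[d+1+t-j] ⁻¹' W s)) := by
      rintro x ⟨hxA, hxq⟩
      by_cases hxT : x ∈ A ∩ (avoidWindow f 1 d A ∩ f^[d+1+t] ⁻¹' W s)
      · exact Or.inl hxT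
      · right
        have hnW : x ∉ avoidWindow f 1 d A := fun hw => hxT ⟨hxA, hw, hxq⟩
        rw [mem_avoidWindow] at hnW
        push_neg at hnW
        obtain ⟨j, hj1, hj2, hjA⟩ := hnW
        have hjR : max R 1 ≤ j := by
          by_contra hlt
          push_neg at hlt
          exact Set.eq_empty_iff_forall_notMem.mp (hR j hj1 (by omega)) x ⟨hxA, hjA⟩
        refine Set.mem_biUnion (Finset.mem_Ico.mpr ⟨hjR, by omega⟩) ⟨hxA, ?_⟩
        rw [Set.mem_preimage]
        refine ⟨hjA, ?_⟩
        rw [Set.mem_preimage, ← Function.iterate_add_apply,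
          show d+1+t-j + j = d+1+t by omega]
        exact hxq
    have hlow := hunionν _ _ _ _ hincl
    have hpieceb : ∀ j ∈ Finset.Ico (max R 1) (d + 1),
        (μ (A ∩ f^[j] ⁻¹' (A ∩ f^[d+1+t-j] ⁻¹' W s))).toReal
          ≤ (p + c * γ j) * ((p + c * γ t) * (μ (W s)).toReal) := by
      intro j hj
      obtain ⟨hj1, hj2⟩ := Finset.mem_Ico.mp hj
      have hSm : MeasurableSet (A ∩ f^[d+1+t-j] ⁻¹' W s) :=
        hA.inter ((hfm.iterate _) (hWm0 s))
      have h1 := hdec (A ∩ f^[d+1+t-j] ⁻¹' W s) j hSm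
      have h2 := hdec (W s) (d+1+t-j) (hWm0 s)
      have h3 : c * γ (d+1+t-j) * (μ (W s)).toReal ≤ c * γ t * (μ (W s)).toReal :=
        mul_le_mul_of_nonneg_right (hcγle (by omega)) hus
      have h4 : (μ (A ∩ f^[d+1+t-j] ⁻¹' W s)).toReal
          ≤ (p + c * γ t) * (μ (W s)).toReal := by
        have := (abs_le.1 h2).2
        rw [add_mul]
        linarith
      have h5 : (μ (A ∩ f^[j] ⁻¹' (A ∩ f^[d+1+t-j] ⁻¹' W s))).toReal
          ≤ (p + c * γ j) * (μ (A ∩ f^[d+1+t-j] ⁻¹' W s)).toReal := by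
        have := (abs_le.1 h1).2
        rw [add_mul]
        linarith
      calc (μ (A ∩ f^[j] ⁻¹' (A ∩ f^[d+1+t-j] ⁻¹' W s))).toReal
          ≤ (p + c * γ j) * (μ (A ∩ f^[d+1+t-j] ⁻¹' W s)).toReal := h5
        _ ≤ (p + c * γ j) * ((p + c * γ t) * (μ (W s)).toReal) :=
            mul_le_mul_of_nonneg_left h4 (add_nonneg hp0 (hcγ j))
    have hsum2 := Finset.sum_le_sum hpieceb
    rw [abs_le]
    constructor
    · have := (abs_le.1 hdBt).1
      linarith
    · have := (abs_le.1 hdBt).2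
      linarith
  -- combinatorial counting lemma
  have hcomb : ∀ g : ℕ → ℝ, (∀ j, 0 ≤ g j) →
      ∑ i ∈ Finset.range ℓ, ∑ j ∈ Finset.Ico (max R 1) (ℓ - i), g j
        ≤ ((ℓ - R : ℕ) : ℝ) * ∑ j ∈ Finset.Ico R ℓ, g j := by
    intro g hg
    rw [Finset.range_eq_Ico,
      ← Finset.sum_Ico_consecutive _ (Nat.zero_le (ℓ - R)) (Nat.sub_le ℓ R)]
    have h2 : ∑ i ∈ Finset.Ico (ℓ - R) ℓ, ∑ j ∈ Finset.Ico (max R 1) (ℓ - i), g j = 0 := by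
      apply Finset.sum_eq_zero
      intro i hi
      obtain ⟨hi1, hi2⟩ := Finset.mem_Ico.mp hi
      rw [Finset.Ico_eq_empty
        (not_lt.mpr (le_trans (show ℓ - i ≤ R by omega) (le_max_left R 1))), Finset.sum_empty]
    have h1 : ∑ i ∈ Finset.Ico 0 (ℓ - R), ∑ j ∈ Finset.Ico (max R 1) (ℓ - i), g j
        ≤ (Finset.Ico 0 (ℓ - R)).card • (∑ j ∈ Finset.Ico R ℓ, g j) := by
      apply Finset.sum_le_card_nsmul
      intro i _
      apply Finset.sum_le_sum_of_subset_of_nonneg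
      · exact Finset.Ico_subset_Ico (le_max_left _ _) (Nat.sub_le ℓ i)
      · intro j _ _; exact hg j
    rw [h2, add_zero]
    refine le_trans h1 ?_
    rw [Nat.card_Ico, Nat.sub_zero, nsmul_eq_mul]
  -- positivity facts
  have hLnn : 0 ≤ L := by
    have h1 : (ℓ:ℝ) ≤ (m:ℝ) := Nat.cast_le.mpr (by omega)
    have h2 : (ℓ:ℝ) * p ≤ (m:ℝ) * p := mul_le_mul_of_nonneg_right h1 hp0
    rw [hL]; linarith
  have hcsum : 0 ≤ c * ∑ q ∈ Finset.Ico R ℓ, γ q := by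
    rw [Finset.mul_sum]; exact Finset.sum_nonneg fun q _ => hcγ q
  have hΞnn : 0 ≤ Ξ := by
    rw [hΞ]
    have t1 : (0:ℝ) ≤ c * (ℓ:ℝ) * γ t := by nlinarith [hcγ t, Nat.cast_nonneg (α := ℝ) ℓ]
    have t2 : (0:ℝ) ≤ c * ((ℓ-R:ℕ):ℝ) * (p + c * γ t) * ∑ q ∈ Finset.Ico R ℓ, γ q := by
      nlinarith [mul_nonneg (mul_nonneg (Nat.cast_nonneg (α := ℝ) (ℓ-R)) hq0) hcsum]
    have t3 : (0:ℝ) ≤ (ℓ:ℝ) * ((ℓ-R:ℕ):ℝ) * (p^2 + p * c * γ t) := by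
      have hin : (0:ℝ) ≤ p^2 + p * c * γ t := by nlinarith [hcγ t, hp0, sq_nonneg p]
      have := mul_nonneg (mul_nonneg (Nat.cast_nonneg (α := ℝ) ℓ)
        (Nat.cast_nonneg (α := ℝ) (ℓ-R))) hin
      linarith
    linarith
  have hT'nn : 0 ≤ (t:ℝ) * (p + c * γ t) := mul_nonneg (Nat.cast_nonneg t) hq0
  have hΥnn : 0 ≤ Υ := by rw [hΥ]; linarith
  have hΞΥ : Ξ ≤ Υ := by rw [hΥ]; linarith
  have hM0 : 0 ≤ L + Υ := by linarith
  have hLM : L ≤ L + Υ := by linarith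
  have hpcΥ : p + c * γ t ≤ Υ := by
    have h1 : (1:ℝ) ≤ (t:ℝ) := by exact_mod_cast ht
    have h2 : (p + c * γ t) ≤ (t:ℝ) * (p + c * γ t) := le_mul_of_one_le_left hq0 h1
    rw [hΥ]; linarith
  -- the main block estimate
  have hA1 : ∀ s : ℕ,
      |(μ (avoidWindow f 0 ℓ A ∩ f^[τ] ⁻¹' W s)).toReal - L * (μ (W s)).toReal|
        ≤ Ξ * (μ (W s)).toReal := by
    intro s
    have hZm : MeasurableSet (f^[τ] ⁻¹' W s) := (hfm.iterate τ) (hWm0 s)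
    have hD := hdecomp ℓ 0 (f^[τ] ⁻¹' W s) hZm
    have hνZ : (μ (f^[τ] ⁻¹' W s)).toReal = (μ (W s)).toReal := hshiftν τ _ (hWm0 s)
    have hterm : ∀ i ∈ Finset.range ℓ,
        |(μ (f^[0+i] ⁻¹' A ∩ (avoidWindow f (0+i+1) (ℓ-i-1) A ∩ f^[τ] ⁻¹' W s))).toReal
            - p * (μ (W s)).toReal|
          ≤ c * γ t * (μ (W s)).toReal
            + (∑ j ∈ Finset.Ico (max R 1) (ℓ - i), (p + c * γ j))
                * ((p + c * γ t) * (μ (W s)).toReal) := by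
      intro i hi
      have hiℓ : i < ℓ := Finset.mem_range.mp hi
      simp only [Nat.zero_add]
      have hset : f^[i] ⁻¹' A ∩ (avoidWindow f (i+1) (ℓ-i-1) A ∩ f^[τ] ⁻¹' W s)
          = f^[i] ⁻¹' (A ∩ (avoidWindow f 1 (ℓ-i-1) A ∩ f^[ℓ-i-1+1+t] ⁻¹' W s)) := by
        have e1 : avoidWindow f (i+1) (ℓ-i-1) A = f^[i] ⁻¹' avoidWindow f 1 (ℓ-i-1) A := by
          rw [show i+1 = 1+i by omega]
          exact avoidWindow_shift f i 1 _ A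
        have e2 : f^[τ] ⁻¹' W s = f^[i] ⁻¹' (f^[ℓ-i-1+1+t] ⁻¹' W s) := by
          rw [show τ = (ℓ-i-1+1+t) + i by omega, Function.iterate_add, Set.preimage_comp]
        rw [e1, e2, ← Set.preimage_inter, ← Set.preimage_inter]
      rw [hset, hshiftν i _ (hA.inter ((hWms 1 _).inter ((hfm.iterate _) (hWm0 s))))]
      have hTB := hTermB s (ℓ-i-1)
      rw [show ℓ-i-1+1 = ℓ-i by omega] at hTB
      rw [show ℓ-i-1+1+t = ℓ-i+t by omega, Finset.sum_mul]
      exact hTB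
    have habs1 : |(∑ i ∈ Finset.range ℓ,
          (μ (f^[0+i] ⁻¹' A ∩ (avoidWindow f (0+i+1) (ℓ-i-1) A ∩ f^[τ] ⁻¹' W s))).toReal)
          - ∑ _i ∈ Finset.range ℓ, p * (μ (W s)).toReal|
        ≤ ∑ i ∈ Finset.range ℓ, (c * γ t * (μ (W s)).toReal
            + (∑ j ∈ Finset.Ico (max R 1) (ℓ - i), (p + c * γ j))
                * ((p + c * γ t) * (μ (W s)).toReal)) := by
      rw [← Finset.sum_sub_distrib]
      exact le_trans (Finset.abs_sum_le_sum_abs _ _) (Finset.sum_le_sum hterm)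
    rw [Finset.sum_const, Finset.card_range, nsmul_eq_mul] at habs1
    have hsum2 : ∑ i ∈ Finset.range ℓ, (c * γ t * (μ (W s)).toReal
          + (∑ j ∈ Finset.Ico (max R 1) (ℓ - i), (p + c * γ j))
              * ((p + c * γ t) * (μ (W s)).toReal))
        = (ℓ:ℝ) * (c * γ t * (μ (W s)).toReal)
          + (∑ i ∈ Finset.range ℓ, ∑ j ∈ Finset.Ico (max R 1) (ℓ - i), (p + c * γ j))
              * ((p + c * γ t) * (μ (W s)).toReal) := by
      rw [Finset.sum_add_distrib, Finset.sum_const, Finset.card_range, nsmul_eq_mul,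
        ← Finset.sum_mul]
    have hC := hcomb (fun j => p + c * γ j) (fun j => add_nonneg hp0 (hcγ j))
    have hGsplit : ∑ j ∈ Finset.Ico R ℓ, (p + c * γ j)
        = ((ℓ-R:ℕ):ℝ) * p + c * ∑ j ∈ Finset.Ico R ℓ, γ j := by
      rw [Finset.sum_add_distrib, Finset.sum_const, Nat.card_Ico, nsmul_eq_mul, Finset.mul_sum]
    have hfinal : (ℓ:ℝ) * (c * γ t * (μ (W s)).toReal)
        + (((ℓ-R:ℕ):ℝ) * (((ℓ-R:ℕ):ℝ) * p + c * ∑ j ∈ Finset.Ico R ℓ, γ j))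
            * ((p + c * γ t) * (μ (W s)).toReal) ≤ Ξ * (μ (W s)).toReal := by
      rw [hΞ]
      have hD1 : ((ℓ-R:ℕ):ℝ) ≤ (ℓ:ℝ) := Nat.cast_le.mpr (Nat.sub_le _ _)
      have hD0 : (0:ℝ) ≤ ((ℓ-R:ℕ):ℝ) := Nat.cast_nonneg _
      have key : ((ℓ-R:ℕ):ℝ) * ((ℓ-R:ℕ):ℝ) * (p * ((p + c * γ t) * (μ (W s)).toReal))
          ≤ (ℓ:ℝ) * ((ℓ-R:ℕ):ℝ) * (p * ((p + c * γ t) * (μ (W s)).toReal)) :=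
        mul_le_mul_of_nonneg_right (mul_le_mul_of_nonneg_right hD1 hD0)
          (mul_nonneg hp0 (mul_nonneg hq0 (hunn s)))
      nlinarith [key]
    have h5 : ∑ i ∈ Finset.range ℓ, (c * γ t * (μ (W s)).toReal
          + (∑ j ∈ Finset.Ico (max R 1) (ℓ - i), (p + c * γ j))
              * ((p + c * γ t) * (μ (W s)).toReal)) ≤ Ξ * (μ (W s)).toReal := by
      rw [hsum2]
      have e1 := mul_le_mul_of_nonneg_right hC (mul_nonneg hq0 (hunn s))
      rw [hGsplit] at e1
      linarith [hfinal]
    have hmain : |(∑ i ∈ Finset.range ℓ,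
          (μ (f^[0+i] ⁻¹' A ∩ (avoidWindow f (0+i+1) (ℓ-i-1) A ∩ f^[τ] ⁻¹' W s))).toReal)
          - (ℓ:ℝ) * (p * (μ (W s)).toReal)| ≤ Ξ * (μ (W s)).toReal :=
      le_trans habs1 h5
    have hDD : (μ (avoidWindow f 0 ℓ A ∩ f^[τ] ⁻¹' W s)).toReal
        = (μ (W s)).toReal - ∑ i ∈ Finset.range ℓ,
            (μ (f^[0+i] ⁻¹' A ∩ (avoidWindow f (0+i+1) (ℓ-i-1) A ∩ f^[τ] ⁻¹' W s))).toReal := by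
      rw [← hνZ]; linarith [hD]
    rw [hDD, hL]
    rw [show (μ (W s)).toReal - (∑ i ∈ Finset.range ℓ,
          (μ (f^[0+i] ⁻¹' A ∩ (avoidWindow f (0+i+1) (ℓ-i-1) A ∩ f^[τ] ⁻¹' W s))).toReal)
          - (1 - (ℓ:ℝ) * p) * (μ (W s)).toReal
        = (ℓ:ℝ) * (p * (μ (W s)).toReal) - ∑ i ∈ Finset.range ℓ,
            (μ (f^[0+i] ⁻¹' A ∩ (avoidWindow f (0+i+1) (ℓ-i-1) A ∩ f^[τ] ⁻¹' W s))).toReal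
        by ring]
    rw [abs_sub_comm]
    exact hmain
  -- the gap estimate
  have hgap : ∀ s : ℕ,
      (μ (W (s + τ))).toReal ≤ (μ (avoidWindow f 0 ℓ A ∩ f^[τ] ⁻¹' W s)).toReal ∧
      (μ (avoidWindow f 0 ℓ A ∩ f^[τ] ⁻¹' W s)).toReal - (μ (W (s + τ))).toReal
        ≤ (t:ℝ) * ((p + c * γ t) * (μ (W (s - t))).toReal) := by
    intro s
    have hsub1 : W (s + τ) ⊆ avoidWindow f 0 ℓ A ∩ f^[τ] ⁻¹' W s := by
      intro x hx
      have hx' : ∀ i, 0 ≤ i → i < 0 + (s + τ) → f^[i] x ∉ A := mem_avoidWindow.mp hx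
      constructor
      · rw [mem_avoidWindow]; intro i h1 h2; exact hx' i h1 (by omega)
      · show x ∈ f^[τ] ⁻¹' avoidWindow f 0 s A
        rw [mem_preimage_avoidWindow]
        intro i h1 h2
        exact hx' (i + τ) (by omega) (by omega)
    have hsub2 : avoidWindow f 0 ℓ A ∩ f^[τ] ⁻¹' W s
        ⊆ W (s + τ) ∪ ⋃ i ∈ Finset.Ico ℓ τ, (f^[i] ⁻¹' (A ∩ f^[τ - i] ⁻¹' W s)) := by
      rintro x ⟨hx1, hx2⟩
      by_cases hxW : x ∈ W (s + τ)
      · exact Or.inl hxW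
      right
      have hx1' := mem_avoidWindow.mp hx1
      have hx2' : ∀ i, 0 ≤ i → i < 0 + s → f^[i + τ] x ∉ A := mem_preimage_avoidWindow.mp hx2
      have hxW' : ¬ ∀ i, 0 ≤ i → i < 0 + (s + τ) → f^[i] x ∉ A :=
        fun h => hxW (mem_avoidWindow.mpr h)
      push_neg at hxW'
      obtain ⟨i, -, hi2, hiA⟩ := hxW'
      have hiℓ : ℓ ≤ i := by
        by_contra h; push_neg at h; exact hx1' i (by omega) (by omega) hiA
      have hiτ : i < τ := by
        by_contra h; push_neg at h
        have := hx2' (i - τ) (by omega) (by omega)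
        rw [show i - τ + τ = i by omega] at this
        exact this hiA
      refine Set.mem_biUnion (Finset.mem_Ico.mpr ⟨hiℓ, hiτ⟩) ?_
      rw [Set.mem_preimage]
      refine ⟨hiA, ?_⟩
      show f^[τ - i] (f^[i] x) ∈ W s
      rw [← Function.iterate_add_apply, show τ - i + i = τ by omega]
      exact hx2
    have h1 := hunionν _ _ _ _ hsub2
    have hterm : ∀ i ∈ Finset.Ico ℓ τ, (μ (f^[i] ⁻¹' (A ∩ f^[τ-i] ⁻¹' W s))).toReal
        ≤ (p + c * γ t) * (μ (W (s - t))).toReal := by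
      intro i _
      rw [hshiftν i _ (hA.inter ((hfm.iterate _) (hWm0 s)))]
      exact hP3 s (τ - i)
    have h2 := Finset.sum_le_sum hterm
    rw [Finset.sum_const, Nat.card_Ico, show τ - ℓ = t by omega, nsmul_eq_mul] at h2
    exact ⟨hνmono hsub1, by linarith⟩
  have hstep : ∀ s : ℕ, |(μ (W (s + τ))).toReal - L * (μ (W s)).toReal|
      ≤ Ξ * (μ (W s)).toReal + (t:ℝ) * ((p + c * γ t) * (μ (W (s - t))).toReal) := by
    intro s
    have h1 := abs_le.1 (hA1 s)
    obtain ⟨h2, h3⟩ := hgap s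
    have h4 : 0 ≤ (t:ℝ) * ((p + c * γ t) * (μ (W (s - t))).toReal) :=
      mul_nonneg (Nat.cast_nonneg t) (mul_nonneg hq0 (hunn _))
    rw [abs_le]
    exact ⟨by linarith [h1.1], by linarith [h1.2]⟩
  have hgrow : ∀ s : ℕ, (μ (W (s + τ))).toReal ≤ (L + Ξ) * (μ (W s)).toReal := by
    intro s
    have h1 := (abs_le.1 (hA1 s)).2
    have h2 := (hgap s).1
    rw [add_mul]; linarith
  -- inductions
  have hW0univ : W 0 = Set.univ := by
    ext x
    simp only [Set.mem_univ, iff_true]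
    show x ∈ avoidWindow f 0 0 A
    rw [mem_avoidWindow]
    intro i h1 h2
    exact absurd h2 (by omega)
  have hW00 : (μ (W 0)).toReal = 1 := by rw [hW0univ]; simp
  have hbar : ∀ j : ℕ, (μ (W (j * τ + ℓ))).toReal ≤ (L + Υ) ^ (j + 1) := by
    intro j
    induction j with
    | zero =>
      have h := hA1 0
      have e : avoidWindow f 0 ℓ A ∩ f^[τ] ⁻¹' W 0 = W ℓ := by
        rw [hW0univ, Set.preimage_univ, Set.inter_univ]
      rw [e, hW00, mul_one, mul_one] at h
      have h2 := (abs_le.1 h).2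
      rw [show 0 * τ + ℓ = ℓ by omega, pow_one]
      linarith
    | succ j ih =>
      have h := hgrow (j * τ + ℓ)
      rw [show j*τ+ℓ+τ = (j+1)*τ+ℓ by ring] at h
      calc (μ (W ((j+1)*τ+ℓ))).toReal ≤ (L+Ξ) * (μ (W (j*τ+ℓ))).toReal := h
        _ ≤ (L+Υ) * (L+Υ)^(j+1) := mul_le_mul (by linarith) ih (hunn _) hM0
        _ = (L+Υ)^(j+1+1) := by ring
  have hup2 : ∀ j : ℕ, (μ (W (j * τ - t))).toReal ≤ (L + Υ) ^ j := by
    intro j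
    cases j with
    | zero =>
      rw [show 0 * τ - t = 0 by omega, hW00, pow_zero]
    | succ j =>
      rw [show (j+1) * τ - t = j * τ + ℓ by rw [add_mul, one_mul]; omega]
      exact hbar j
  have haj : ∀ j : ℕ, (μ (W (j * τ))).toReal ≤ (L + Υ) ^ j := fun j =>
    le_trans (humono (Nat.sub_le (j*τ) t)) (hup2 j)
  have herr : ∀ j : ℕ, |(μ (W (j * τ))).toReal - L ^ j| ≤ (j:ℝ) * Υ * (L + Υ) ^ (j - 1) := by
    intro j
    induction j with
    | zero => simp [show (0:ℕ) * τ = 0 by omega, hW00]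
    | succ j ih =>
      have hs := hstep (j * τ)
      rw [show j*τ+τ = (j+1)*τ by ring] at hs
      have h1 : Ξ * (μ (W (j*τ))).toReal ≤ Ξ * (L+Υ)^j :=
        mul_le_mul_of_nonneg_left (haj j) hΞnn
      have h2 : (t:ℝ) * ((p + c * γ t) * (μ (W (j*τ - t))).toReal)
          ≤ (t:ℝ) * ((p + c * γ t) * (L+Υ)^j) :=
        mul_le_mul_of_nonneg_left (mul_le_mul_of_nonneg_left (hup2 j) hq0) (Nat.cast_nonneg t)
      have hΥM : Ξ * (L+Υ)^j + (t:ℝ) * ((p + c * γ t) * (L+Υ)^j) = Υ * (L+Υ)^j := by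
        rw [hΥ]; ring
      have h4 : L * ((j:ℝ) * Υ * (L+Υ)^(j-1)) ≤ (j:ℝ) * Υ * (L+Υ)^j := by
        cases j with
        | zero => simp
        | succ i =>
          rw [Nat.add_sub_cancel, pow_succ]
          have hnn : 0 ≤ ((i+1:ℕ):ℝ) * Υ * (L+Υ)^i :=
            mul_nonneg (mul_nonneg (Nat.cast_nonneg _) hΥnn) (pow_nonneg hM0 i)
          nlinarith [mul_le_mul_of_nonneg_left hLM hnn]
      have h5 : L * |(μ (W (j*τ))).toReal - L^j| ≤ L * ((j:ℝ) * Υ * (L+Υ)^(j-1)) :=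
        mul_le_mul_of_nonneg_left ih hLnn
      have htri : |(μ (W ((j+1)*τ))).toReal - L^(j+1)|
          ≤ |(μ (W ((j+1)*τ))).toReal - L * (μ (W (j*τ))).toReal|
            + L * |(μ (W (j*τ))).toReal - L^j| := by
        rw [show (μ (W ((j+1)*τ))).toReal - L^(j+1)
            = ((μ (W ((j+1)*τ))).toReal - L * (μ (W (j*τ))).toReal)
              + L * ((μ (W (j*τ))).toReal - L^j) by ring]
        refine le_trans (abs_add_le _ _) ?_
        rw [abs_mul, abs_of_nonneg hLnn]
      have e2 : |(μ (W ((j+1)*τ))).toReal - L * (μ (W (j*τ))).toReal| ≤ Υ * (L+Υ)^j := by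
        refine le_trans hs ?_
        rw [← hΥM]
        linarith
      rw [Nat.add_sub_cancel]
      have hmain : |(μ (W ((j+1)*τ))).toReal - L^(j+1)| ≤ ((j:ℝ)+1) * Υ * (L+Υ)^j := by
        have e1 : Υ * (L+Υ)^j + (j:ℝ) * Υ * (L+Υ)^j = ((j:ℝ)+1) * Υ * (L+Υ)^j := by ring
        linarith [htri, e2, le_trans h5 h4]
      rw [show ((j+1:ℕ):ℝ) = (j:ℝ)+1 by push_cast; ring]
      exact hmain
  -- final assembly
  have hτm : τ = m := by omega
  have hkτb : n = k * τ + b := by rw [hτm]; exact hn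
  have hbmod : b = n % k := by
    have hdm := Nat.div_add_mod n k
    rw [← hmdef] at hdm
    omega
  have hbk : b < k := by rw [hbmod]; exact Nat.mod_lt _ hk
  have hZb : MeasurableSet (f^[b] ⁻¹' W (k*τ)) := (hfm.iterate b) (hWm0 _)
  have hDb := hdecomp b 0 (f^[b] ⁻¹' W (k*τ)) hZb
  have hWn : avoidWindow f 0 b A ∩ f^[b] ⁻¹' W (k*τ) = W n := by
    ext x
    constructor
    · rintro ⟨h1, h2⟩
      have h1' := mem_avoidWindow.mp h1
      have h2' : ∀ i, 0 ≤ i → i < 0 + (k*τ) → f^[i+b] x ∉ A := mem_preimage_avoidWindow.mp h2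
      show x ∈ avoidWindow f 0 n A
      rw [mem_avoidWindow]
      intro i hh1 hh2
      rcases lt_or_ge i b with h | h
      · exact h1' i (by omega) (by omega)
      · have := h2' (i - b) (by omega) (by omega)
        rwa [show i - b + b = i by omega] at this
    · intro hx
      have hx' : ∀ i, 0 ≤ i → i < 0 + n → f^[i] x ∉ A := mem_avoidWindow.mp hx
      refine ⟨mem_avoidWindow.mpr (fun i h1 h2 => hx' i h1 (by omega)), ?_⟩
      show x ∈ f^[b] ⁻¹' avoidWindow f 0 (k*τ) A
      rw [mem_preimage_avoidWindow]
      intro i h1 h2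
      exact hx' (i + b) (by omega) (by omega)
  have hνZb : (μ (f^[b] ⁻¹' W (k*τ))).toReal = (μ (W (k*τ))).toReal := hshiftν b _ (hWm0 _)
  have hremterm : ∀ i ∈ Finset.range b,
      (μ (f^[0+i] ⁻¹' A ∩ (avoidWindow f (0+i+1) (b-i-1) A ∩ f^[b] ⁻¹' W (k*τ)))).toReal
        ≤ (p + c * γ t) * (L+Υ)^k := by
    intro i hi
    have hib : i < b := Finset.mem_range.mp hi
    have hsub : f^[0+i] ⁻¹' A ∩ (avoidWindow f (0+i+1) (b-i-1) A ∩ f^[b] ⁻¹' W (k*τ))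
        ⊆ f^[i] ⁻¹' (A ∩ f^[b-i] ⁻¹' W (k*τ)) := by
      rintro x ⟨h1, -, h3⟩
      rw [Nat.zero_add] at h1
      rw [Set.mem_preimage]
      refine ⟨h1, ?_⟩
      show f^[b-i] (f^[i] x) ∈ W (k*τ)
      rw [← Function.iterate_add_apply, show b-i+i = b by omega]
      exact h3
    calc (μ (f^[0+i] ⁻¹' A ∩ (avoidWindow f (0+i+1) (b-i-1) A ∩ f^[b] ⁻¹' W (k*τ)))).toReal
        ≤ (μ (f^[i] ⁻¹' (A ∩ f^[b-i] ⁻¹' W (k*τ)))).toReal := hνmono hsub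
      _ = (μ (A ∩ f^[b-i] ⁻¹' W (k*τ))).toReal :=
          hshiftν i _ (hA.inter ((hfm.iterate _) (hWm0 _)))
      _ ≤ (p + c * γ t) * (μ (W (k*τ - t))).toReal := hP3 _ _
      _ ≤ (p + c * γ t) * (L+Υ)^k := mul_le_mul_of_nonneg_left (hup2 k) hq0
  have hrem : (μ (W (k*τ))).toReal - (μ (W n)).toReal
      ≤ (b:ℝ) * ((p + c * γ t) * (L+Υ)^k) := by
    rw [← hWn, ← hνZb, hDb]
    calc (∑ i ∈ Finset.range b,
          (μ (f^[0+i] ⁻¹' A ∩ (avoidWindow f (0+i+1) (b-i-1) A ∩ f^[b] ⁻¹' W (k*τ)))).toReal)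
        ≤ ∑ _i ∈ Finset.range b, (p + c * γ t) * (L+Υ)^k := Finset.sum_le_sum hremterm
      _ = (b:ℝ) * ((p + c * γ t) * (L+Υ)^k) := by
          rw [Finset.sum_const, Finset.card_range, nsmul_eq_mul]
  have hremnn : 0 ≤ (μ (W (k*τ))).toReal - (μ (W n)).toReal := by
    have := humono (show k*τ ≤ n by omega)
    linarith
  have hek := herr k
  have hfin1 : (b:ℝ) * ((p + c * γ t) * (L+Υ)^k) ≤ (k:ℝ) * Υ * ((L+Υ)^(k-1) * (L+Υ)) := by
    have hb' : (b:ℝ) ≤ (k:ℝ) := Nat.cast_le.mpr (le_of_lt hbk)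
    have hpow : (0:ℝ) ≤ (L+Υ)^k := pow_nonneg hM0 k
    have h1 : (b:ℝ) * (p + c * γ t) ≤ (k:ℝ) * Υ :=
      mul_le_mul hb' hpcΥ hq0 (Nat.cast_nonneg k)
    have hpowsplit : (L+Υ)^k = (L+Υ)^(k-1) * (L+Υ) := by
      conv_lhs => rw [show k = (k-1) + 1 by omega]
      rw [pow_succ]
    calc (b:ℝ) * ((p + c * γ t) * (L+Υ)^k) = ((b:ℝ) * (p + c * γ t)) * (L+Υ)^k := by ring
      _ ≤ ((k:ℝ) * Υ) * (L+Υ)^k := mul_le_mul_of_nonneg_right h1 hpow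
      _ = (k:ℝ) * Υ * ((L+Υ)^(k-1) * (L+Υ)) := by rw [hpowsplit]
  have hfinal2 : (k:ℝ) * Υ * (L + Υ) ^ (k - 1) * (1 + L + Υ)
      = (k:ℝ) * Υ * (L+Υ)^(k-1) + (k:ℝ) * Υ * ((L+Υ)^(k-1) * (L+Υ)) := by ring
  show |(μ (W n)).toReal - L ^ k| ≤ (k:ℝ) * Υ * (L + Υ) ^ (k - 1) * (1 + L + Υ)
  have hek1 := (abs_le.1 hek).1
  have hek2 := (abs_le.1 hek).2
  rw [abs_le]
  constructor
  · linarith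
  · linarith
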